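/- Let q be a prime power and for each m ≥ 1 let π_q(j) be the number of monic irreducible polynomials of degree j in F_q[t]. Then there exists a constant C depending only on q such that for all m ≥ 1, | ∑_{j=1}^m (j·log(q)·π_q(j))/q^j − m·log(q) | ≤ C. -/

import Mathlib

open Polynomial



theorem nat_pow_sub_one_dvd_iff {q : ℕ} (hq : 1 < q) {d n : ℕ} (hd : d ≠ 0) :
    q ^ d - 1 ∣ q ^ n - 1 ↔ d ∣ n := by
  constructor
  · intro h
    rcases Nat.lt_or_ge (n % d) 1 with hr | hr
    · exact Nat.dvd_of_mod_eq_zero (Nat.lt_one_iff.mp hr)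
    · exfalso
      set r := n % d with hrdef
      have hrd : r < d := Nat.mod_lt _ (Nat.pos_of_ne_zero hd)
      -- q^n - 1 = q^r * (q^(d*(n/d)) - 1) + (q^r - 1)
      have hn' : n = d * (n / d) + r := (Nat.div_add_mod n d).symm
      have h1 : q ^ d - 1 ∣ q ^ (d * (n / d)) - 1 := by
        have := Nat.sub_dvd_pow_sub_pow (q ^ d) 1 (n / d)
        simpa [← pow_mul, one_pow] using this
      have h2 : q ^ n - 1 = q ^ r * (q ^ (d * (n / d)) - 1) + (q ^ r - 1) := by
        have hq1 : 1 ≤ q ^ (d * (n / d)) := Nat.one_le_pow _ _ (by omega)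
        have hq2 : 1 ≤ q ^ r := Nat.one_le_pow _ _ (by omega)
        have hA : q ^ n = q ^ r * q ^ (d * (n / d)) := by
          rw [← pow_add]; congr 1; omega
        have hq3 : q ^ r ≤ q ^ r * q ^ (d * (n / d)) :=
          Nat.le_mul_of_pos_right _ (by positivity)
        rw [hA, Nat.mul_sub, Nat.mul_one]
        omega
      have h3 : q ^ d - 1 ∣ q ^ r - 1 := by
        have := (Nat.dvd_add_right (h1.mul_left (q ^ r))).mp (h2 ▸ h)
        exact this
      have h4 : q ^ r - 1 < q ^ d - 1 := by
        have : q ^ r < q ^ d := Nat.pow_lt_pow_right hq hrd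
        have : 1 ≤ q ^ r := Nat.one_le_pow _ _ (by omega)
        omega
      have h5 : q ^ r - 1 = 0 := Nat.eq_zero_of_dvd_of_lt h3 h4
      have : 2 ≤ q ^ r := by
        calc 2 ≤ q := hq
        _ = q ^ 1 := (pow_one q).symm
        _ ≤ q ^ r := Nat.pow_le_pow_right (by omega) hr
      omega
  · rintro ⟨c, rfl⟩
    have := Nat.sub_dvd_pow_sub_pow (q ^ d) 1 c
    simpa [← pow_mul, one_pow] using this

-- Lemma A: divisibility criterion
theorem dvd_X_pow_card_pow_sub_X_iff (F : Type) [Field F] [Fintype F]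
    {P : F[X]} (hm : P.Monic) (hi : Irreducible P) (n : ℕ) (hn : n ≠ 0) :
    P ∣ (X ^ Fintype.card F ^ n - X) ↔ P.natDegree ∣ n := by
  classical
  set q := Fintype.card F with hq
  have hq1 : 1 < q := Fintype.one_lt_card
  have hP0 : P ≠ 0 := hm.ne_zero
  have hdpos : 0 < P.natDegree := hi.natDegree_pos
  haveI : Fact (Irreducible P) := ⟨hi⟩
  set K := AdjoinRoot P
  set x : K := AdjoinRoot.root P
  have hminpoly : minpoly F x = P := by
    rw [AdjoinRoot.minpoly_root hP0, hm.leadingCoeff, inv_one, map_one, mul_one]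
  haveI : FiniteDimensional F K := (AdjoinRoot.powerBasis hP0).finite
  haveI : Fintype K := Module.fintypeOfFintype (AdjoinRoot.powerBasis hP0).basis
  have hd : Module.finrank F K = P.natDegree := by
    rw [(AdjoinRoot.powerBasis hP0).finrank, AdjoinRoot.powerBasis_dim]
  have hcardK : Fintype.card K = q ^ P.natDegree := by
    rw [Module.card_eq_pow_finrank (K := F) (V := K), hd]
  have haevalP : Polynomial.aeval x P = 0 := by
    rw [AdjoinRoot.aeval_eq, AdjoinRoot.mk_self]
  have hdvd_iff : P ∣ (X ^ q ^ n - X) ↔ x ^ q ^ n = x := by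
    constructor
    · rintro ⟨c, hc⟩
      have h0 : Polynomial.aeval x (X ^ q ^ n - X : F[X]) = 0 := by
        rw [hc, map_mul, haevalP, zero_mul]
      simpa [sub_eq_zero] using h0
    · intro h
      have h0 : Polynomial.aeval x (X ^ q ^ n - X : F[X]) = 0 := by
        simp [sub_eq_zero, h]
      have := minpoly.dvd F x h0
      rwa [hminpoly] at this
  constructor
  · intro hdvd
    have hx : x ^ q ^ n = x := hdvd_iff.mp hdvd
    -- get charP
    obtain ⟨p, hpp⟩ := CharP.exists F
    haveI hpF : CharP F p := hpp
    obtain ⟨k, hp', hqpk⟩ := FiniteField.card F p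
    haveI hpK : CharP K p := charP_of_injective_algebraMap (algebraMap F K).injective p
    haveI : Fact p.Prime := ⟨hp'⟩
    haveI : ExpChar K p := ExpChar.prime hp'
    -- q ^ n = p ^ (k * n)
    have hqn : q ^ n = p ^ ((k : ℕ) * n) := by
      rw [hq, hqpk, ← pow_mul]
    -- the algebra endomorphism y ↦ y ^ (q ^ n)
    let φ : K →ₐ[F] K :=
      { toRingHom := iterateFrobenius K p ((k : ℕ) * n)
        commutes' := fun a => by
          show iterateFrobenius K p ((k : ℕ) * n) (algebraMap F K a) = algebraMap F K a
          rw [iterateFrobenius_def, ← map_pow, ← hqn, hq, FiniteField.pow_card_pow] }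
    have hxφ : φ x = x := by
      show (iterateFrobenius K p ((k : ℕ) * n)) x = x
      rw [iterateFrobenius_def, ← hqn, hx]
    have hall : ∀ y : K, y ^ q ^ n = y := by
      intro y
      have : Algebra.adjoin F ({x} : Set K) ≤ AlgHom.equalizer φ (AlgHom.id F K) := by
        apply Algebra.adjoin_le
        simp [AlgHom.mem_equalizer, hxφ]
      have hy : y ∈ AlgHom.equalizer φ (AlgHom.id F K) := by
        apply this
        rw [AdjoinRoot.adjoinRoot_eq_top]
        trivial
      have := hy
      simp only [AlgHom.mem_equalizer] at this
      have h2 : (iterateFrobenius K p ((k : ℕ) * n)) y = y := this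
      rwa [iterateFrobenius_def, ← hqn] at h2
    -- generator of units
    obtain ⟨g, hg⟩ := IsCyclic.exists_generator (α := Kˣ)
    have horder : orderOf g = q ^ P.natDegree - 1 := by
      rw [orderOf_eq_card_of_forall_mem_zpowers hg, Nat.card_units,
        Nat.card_eq_fintype_card, hcardK]
    have hg1 : g ^ (q ^ n - 1) = 1 := by
      have h1 : (g : K) ^ q ^ n = (g : K) := hall g
      have h2 : (g : K) ^ (q ^ n - 1) = 1 := by
        have hg0 : (g : K) ≠ 0 := Units.ne_zero g
        have : (g : K) ^ (q ^ n - 1) * (g : K) = (g : K) := by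
          rw [← pow_succ, Nat.sub_add_cancel (Nat.one_le_pow _ _ (by omega)), h1]
        exact mul_right_cancel₀ hg0 (this.trans (one_mul _).symm)
      ext
      push_cast
      exact h2
    have hdvd : q ^ P.natDegree - 1 ∣ q ^ n - 1 := horder ▸ orderOf_dvd_of_pow_eq_one hg1
    exact (nat_pow_sub_one_dvd_iff hq1 (by omega)).mp hdvd
  · rintro ⟨c, hc⟩
    apply hdvd_iff.mpr
    have h : q ^ n = Fintype.card K ^ c := by rw [hcardK, ← pow_mul, ← hc]
    rw [h, FiniteField.pow_card_pow]



-- Lemma C: Gauss identity  ∑_{d ∣ n} d·π(d) = q^n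
theorem key_identity (F : Type) [Field F] [Fintype F] (n : ℕ) (hn : n ≠ 0) :
    ∑ d ∈ n.divisors,
        d * Nat.card {P : F[X] // P.Monic ∧ Irreducible P ∧ P.natDegree = d}
      = Fintype.card F ^ n := by
  classical
  set q := Fintype.card F with hqdef
  have hq1 : 1 < q := Fintype.one_lt_card
  set f : F[X] := X ^ q ^ n - X with hfdef
  have hf0 : f ≠ 0 := FiniteField.X_pow_card_pow_sub_X_ne_zero F hn hq1
  have hfdeg : f.natDegree = q ^ n := FiniteField.X_pow_card_pow_sub_X_natDegree_eq F hn hq1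
  obtain ⟨p, hpp⟩ := CharP.exists F
  haveI : CharP F p := hpp
  obtain ⟨k, hp', hqpk⟩ := FiniteField.card F p
  have hsep : f.Separable := by
    apply galois_poly_separable p (q ^ n)
    rw [hqdef, hqpk, ← pow_mul]
    exact dvd_pow_self p (by positivity)
  have hsf : Squarefree f := hsep.squarefree
  set M := UniqueFactorizationMonoid.normalizedFactors f with hMdef
  have hnodup : M.Nodup :=
    (UniqueFactorizationMonoid.squarefree_iff_nodup_normalizedFactors hf0).mp hsf
  have hmem_ne : ∀ Q ∈ M, Q ≠ (0 : F[X]) := fun Q hQ h0 =>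
    UniqueFactorizationMonoid.zero_notMem_normalizedFactors f (h0 ▸ hQ)
  have hmem_monic : ∀ Q ∈ M, Q.Monic := by
    intro Q hQ
    have h1 := UniqueFactorizationMonoid.normalize_normalized_factor Q hQ
    have h2 := Polynomial.monic_normalize (hmem_ne Q hQ)
    rwa [h1] at h2
  have hmem_irr : ∀ Q ∈ M, Irreducible Q := fun Q hQ =>
    UniqueFactorizationMonoid.irreducible_of_normalized_factor Q hQ
  set T := M.toFinset with hTdef
  have hTval : T.val = M := Multiset.dedup_eq_self.mpr hnodup
  -- characterization of membership
  have hT : ∀ Q : F[X], Q ∈ T ↔ (Q.Monic ∧ Irreducible Q ∧ Q.natDegree ∣ n) := by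
    intro Q
    rw [hTdef, Multiset.mem_toFinset]
    constructor
    · intro hQ
      refine ⟨hmem_monic Q hQ, hmem_irr Q hQ, ?_⟩
      exact (dvd_X_pow_card_pow_sub_X_iff F (hmem_monic Q hQ) (hmem_irr Q hQ) n hn).mp
        (UniqueFactorizationMonoid.dvd_of_mem_normalizedFactors hQ)
    · rintro ⟨hQm, hQi, hQd⟩
      have hdvd : Q ∣ f := (dvd_X_pow_card_pow_sub_X_iff F hQm hQi n hn).mpr hQd
      obtain ⟨Q', hQ'mem, hassoc⟩ :=
        UniqueFactorizationMonoid.exists_mem_normalizedFactors_of_dvd hf0 hQi hdvd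
      have : Q = Q' := by
        have h1 := normalize_eq_normalize hassoc.dvd hassoc.symm.dvd
        rwa [hQm.normalize_eq_self,
          UniqueFactorizationMonoid.normalize_normalized_factor Q' hQ'mem] at h1
      rwa [this]
  -- degree sum
  have hdegsum : ∑ Q ∈ T, Q.natDegree = q ^ n := by
    have hprod : Associated M.prod f := UniqueFactorizationMonoid.prod_normalizedFactors hf0
    obtain ⟨u, hu⟩ := hprod
    have hdegprod : M.prod.natDegree = (M.map natDegree).sum :=
      Polynomial.natDegree_multiset_prod M (fun h => (hmem_ne 0 h) rfl)
    have hudeg : (u : F[X]).natDegree = 0 :=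
      Polynomial.natDegree_eq_zero_of_isUnit u.isUnit
    have : f.natDegree = M.prod.natDegree := by
      rw [← hu, Polynomial.natDegree_mul (by
        intro h; rw [h, zero_mul] at hu; exact hf0 hu.symm) (Units.ne_zero u), hudeg, add_zero]
    calc ∑ Q ∈ T, Q.natDegree = (M.map natDegree).sum := by
          rw [Finset.sum, hTval]
      _ = M.prod.natDegree := hdegprod.symm
      _ = f.natDegree := this.symm
      _ = q ^ n := hfdeg
  -- fiberwise grouping
  have hmaps : ∀ Q ∈ T, Q.natDegree ∈ n.divisors := by
    intro Q hQ
    rcases (hT Q).mp hQ with ⟨_, _, hd⟩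
    exact Nat.mem_divisors.mpr ⟨hd, hn⟩
  have hfib : ∑ d ∈ n.divisors, ∑ Q ∈ T.filter (fun Q => Q.natDegree = d), Q.natDegree
      = ∑ Q ∈ T, Q.natDegree := Finset.sum_fiberwise_of_maps_to hmaps _
  -- count in each fiber
  have hcount : ∀ d ∈ n.divisors,
      Nat.card {P : F[X] // P.Monic ∧ Irreducible P ∧ P.natDegree = d}
        = (T.filter (fun Q => Q.natDegree = d)).card := by
    intro d hd
    have hdn : d ∣ n := (Nat.mem_divisors.mp hd).1
    have hset : {P : F[X] | P.Monic ∧ Irreducible P ∧ P.natDegree = d}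
        = ↑(T.filter (fun Q => Q.natDegree = d)) := by
      ext Q
      simp only [Set.mem_setOf_eq, Finset.coe_filter, hT Q]
      constructor
      · rintro ⟨h1, h2, h3⟩
        exact ⟨⟨h1, h2, h3 ▸ hdn⟩, h3⟩
      · rintro ⟨⟨h1, h2, _⟩, h3⟩
        exact ⟨h1, h2, h3⟩
    calc Nat.card {P : F[X] // P.Monic ∧ Irreducible P ∧ P.natDegree = d}
        = Set.ncard {P : F[X] | P.Monic ∧ Irreducible P ∧ P.natDegree = d} :=
          (Nat.card_coe_set_eq _)
      _ = (T.filter (fun Q => Q.natDegree = d)).card := by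
          rw [hset, Set.ncard_coe_finset]
  calc ∑ d ∈ n.divisors,
        d * Nat.card {P : F[X] // P.Monic ∧ Irreducible P ∧ P.natDegree = d}
      = ∑ d ∈ n.divisors, ∑ Q ∈ T.filter (fun Q => Q.natDegree = d), Q.natDegree := by
        apply Finset.sum_congr rfl
        intro d hd
        rw [hcount d hd]
        rw [Finset.sum_congr rfl (fun Q hQ => (Finset.mem_filter.mp hQ).2),
          Finset.sum_const, smul_eq_mul, mul_comm]
    _ = ∑ Q ∈ T, Q.natDegree := hfib
    _ = q ^ n := hdegsum



noncomputable def piq (F : Type) [Field F] [Fintype F] (d : ℕ) : ℕ :=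
  Nat.card {P : F[X] // P.Monic ∧ Irreducible P ∧ P.natDegree = d}

theorem key_identity' (F : Type) [Field F] [Fintype F] (n : ℕ) (hn : n ≠ 0) :
    ∑ d ∈ n.divisors, d * piq F d = Fintype.card F ^ n := by
  simpa only [piq] using key_identity F n hn

theorem geo_bound {q : ℕ} (hq : 2 ≤ q) (k : ℕ) :
    ∑ d ∈ Finset.Icc 1 k, q ^ d ≤ 2 * q ^ k := by
  induction k with
  | zero => simp
  | succ k ih =>
    have hIcc : Finset.Icc 1 (k + 1) = insert (k + 1) (Finset.Icc 1 k) := by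
      ext a; simp [Finset.mem_Icc, Finset.mem_insert]; omega
    rw [hIcc, Finset.sum_insert (by simp)]
    have h2 : 2 * q ^ k ≤ q ^ (k + 1) := by
      rw [pow_succ, mul_comm (q ^ k) q]
      exact Nat.mul_le_mul_right _ hq
    omega

theorem pi_upper (F : Type) [Field F] [Fintype F] (j : ℕ) (hj : j ≠ 0) :
    j * piq F j ≤ Fintype.card F ^ j := by
  rw [← key_identity' F j hj]
  exact Finset.single_le_sum (f := fun d => d * piq F d)
    (fun i _ => Nat.zero_le _) (Nat.mem_divisors_self j hj)

theorem pi_lower (F : Type) [Field F] [Fintype F] (j : ℕ) (hj : j ≠ 0) :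
    Fintype.card F ^ j ≤ j * piq F j + 2 * Fintype.card F ^ (j / 2) := by
  classical
  have hq1 : 1 < Fintype.card F := Fintype.one_lt_card
  have hid := key_identity' F j hj
  have hsplit : j * piq F j + ∑ d ∈ j.divisors.erase j, d * piq F d
      = Fintype.card F ^ j := by
    rw [← hid]
    exact Finset.add_sum_erase _ (fun d => d * piq F d) (Nat.mem_divisors_self j hj)
  have hsub : j.divisors.erase j ⊆ Finset.Icc 1 (j / 2) := by
    intro d hd
    obtain ⟨hne, hdm⟩ := Finset.mem_erase.mp hd
    have hdpos : 0 < d := Nat.pos_of_mem_divisors hdm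
    obtain ⟨c, hc⟩ := (Nat.mem_divisors.mp hdm).1
    have hc0 : c ≠ 0 := by rintro rfl; rw [mul_zero] at hc; exact hj hc
    have hc1 : c ≠ 1 := by rintro rfl; rw [mul_one] at hc; exact hne hc.symm
    have h2d : d * 2 ≤ j := by
      rw [hc]; exact Nat.mul_le_mul_left d (by omega)
    exact Finset.mem_Icc.mpr ⟨hdpos, (Nat.le_div_iff_mul_le (by norm_num)).mpr h2d⟩
  have h1 : ∑ d ∈ j.divisors.erase j, d * piq F d
      ≤ ∑ d ∈ Finset.Icc 1 (j / 2), Fintype.card F ^ d := by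
    calc ∑ d ∈ j.divisors.erase j, d * piq F d
        ≤ ∑ d ∈ j.divisors.erase j, Fintype.card F ^ d := by
          apply Finset.sum_le_sum
          intro d hd
          have hdpos : 0 < d := Nat.pos_of_mem_divisors (Finset.mem_erase.mp hd).2
          exact pi_upper F d (by omega)
      _ ≤ _ := Finset.sum_le_sum_of_subset hsub
  have h2 := geo_bound hq1 (j / 2)
  omega

/-- There is a constant `C` depending only on `q` such that for all `m ≥ 1`,
`|∑_{j=1}^m j·log(q)·π_q(j)/q^j − m·log(q)| ≤ C`, where `π_q(j)` is the number
of monic irreducible polynomials of degree `j` over the field with `q` elements. -/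
theorem stmt_8 (F : Type) [Field F] [Fintype F] (q : ℕ) (hq : Fintype.card F = q) :
    ∃ C : ℝ, ∀ m : ℕ, 1 ≤ m →
      |(∑ j ∈ Finset.Icc 1 m,
          (j : ℝ) * Real.log q *
            (Nat.card {P : F[X] // P.Monic ∧ Irreducible P ∧ P.natDegree = j} : ℝ)
              / (q : ℝ) ^ j)
        - (m : ℝ) * Real.log q| ≤ C := by
  subst hq
  have hq2 : 2 ≤ Fintype.card F := Fintype.one_lt_card
  set qR : ℝ := (Fintype.card F : ℝ) with hqR
  have hqR2 : (2 : ℝ) ≤ qR := by rw [hqR]; exact_mod_cast hq2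
  have hqRpos : (0 : ℝ) < qR := by linarith
  have hs1 : 1 < Real.sqrt qR := by
    have : Real.sqrt 1 < Real.sqrt qR := Real.sqrt_lt_sqrt (by norm_num) (by linarith)
    simpa using this
  have hspos : 0 < Real.sqrt qR := by linarith
  set r : ℝ := (Real.sqrt qR)⁻¹ with hrdef
  have hr0 : 0 < r := inv_pos.mpr hspos
  have hr1 : r < 1 := inv_lt_one_of_one_lt₀ hs1
  have hlog : 0 ≤ Real.log qR := Real.log_nonneg (by linarith)
  refine ⟨Real.log qR * (2 * (1 - r)⁻¹), ?_⟩
  intro m hm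
  -- per-term bound
  have hterm : ∀ j, j ∈ Finset.Icc 1 m →
      |((j * piq F j : ℕ) : ℝ) / qR ^ j - 1| ≤ 2 * r ^ (j - 1) := by
    intro j hj
    have hj1 : 1 ≤ j := (Finset.mem_Icc.mp hj).1
    have hpowpos : (0 : ℝ) < qR ^ j := pow_pos hqRpos j
    set t : ℝ := ((j * piq F j : ℕ) : ℝ) / qR ^ j with htdef
    have ht1 : t ≤ 1 := by
      rw [htdef, div_le_one hpowpos]
      have := pi_upper F j (by omega)
      calc ((j * piq F j : ℕ) : ℝ) ≤ ((Fintype.card F ^ j : ℕ) : ℝ) := by exact_mod_cast this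
        _ = qR ^ j := by push_cast; rfl
    have hrpow_nonneg : (0 : ℝ) ≤ 2 * r ^ (j - 1) := by positivity
    -- key inequality : qR^(j/2) * (sqrt qR)^(j-1) ≤ qR^j
    have hsq : Real.sqrt qR ^ 2 = qR := Real.sq_sqrt (by linarith)
    have hkey : qR ^ (j / 2) * Real.sqrt qR ^ (j - 1) ≤ qR ^ j := by
      have e1 : qR ^ (j / 2) = Real.sqrt qR ^ (2 * (j / 2)) := by
        rw [pow_mul, hsq]
      have e2 : qR ^ j = Real.sqrt qR ^ (2 * j) := by rw [pow_mul, hsq]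
      rw [e1, e2, ← pow_add]
      apply pow_le_pow_right₀ (le_of_lt hs1)
      omega
    have hhalf : qR ^ (j / 2) ≤ r ^ (j - 1) * qR ^ j := by
      have h1 : qR ^ (j / 2) ≤ qR ^ j / Real.sqrt qR ^ (j - 1) :=
        (le_div_iff₀ (pow_pos hspos _)).mpr hkey
      calc qR ^ (j / 2) ≤ qR ^ j / Real.sqrt qR ^ (j - 1) := h1
        _ = r ^ (j - 1) * qR ^ j := by
            rw [hrdef, inv_pow, div_eq_mul_inv, mul_comm]
    have ht2 : 1 - t ≤ 2 * r ^ (j - 1) := by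
      have hlow := pi_lower F j (by omega)
      have hlowR : qR ^ j ≤ ((j * piq F j : ℕ) : ℝ) + 2 * qR ^ (j / 2) := by
        have : ((Fintype.card F ^ j : ℕ) : ℝ)
            ≤ ((j * piq F j + 2 * Fintype.card F ^ (j / 2) : ℕ) : ℝ) := by exact_mod_cast hlow
        push_cast at this ⊢
        convert this using 2 <;> push_cast <;> ring
      have : qR ^ j - ((j * piq F j : ℕ) : ℝ) ≤ 2 * (r ^ (j - 1) * qR ^ j) := by
        nlinarith [hhalf]
      have hcancel : t * qR ^ j = ((j * piq F j : ℕ) : ℝ) := by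
        rw [htdef, div_mul_cancel₀ _ hpowpos.ne']
      have h3 : (1 - t) * qR ^ j ≤ (2 * r ^ (j - 1)) * qR ^ j := by
        have expand : (1 - t) * qR ^ j = qR ^ j - t * qR ^ j := by ring
        rw [expand, hcancel]
        nlinarith [this]
      exact le_of_mul_le_mul_right h3 hpowpos
    rw [abs_le]
    constructor
    · linarith
    · linarith
  -- geometric sum bound
  have hgeom : ∑ j ∈ Finset.Icc 1 m, r ^ (j - 1) ≤ (1 - r)⁻¹ := by
    have he : ∑ j ∈ Finset.Icc 1 m, r ^ (j - 1) = ∑ i ∈ Finset.range m, r ^ i := by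
      rw [← Finset.Ico_add_one_right_eq_Icc, Finset.sum_Ico_eq_sum_range]
      simp
    rw [he]
    calc ∑ i ∈ Finset.range m, r ^ i
        ≤ ∑' i : ℕ, r ^ i := (summable_geometric_of_lt_one hr0.le hr1).sum_le_tsum _
          (fun i _ => by positivity)
      _ = (1 - r)⁻¹ := tsum_geometric_of_lt_one hr0.le hr1
  -- assembling
  have hcard : (Finset.Icc 1 m).card = m := by rw [Nat.card_Icc]; omega
  have hconst : (m : ℝ) * Real.log qR = ∑ j ∈ Finset.Icc 1 m, Real.log qR := by
    rw [Finset.sum_const, hcard, nsmul_eq_mul]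
  have hrw : ∀ j ∈ Finset.Icc 1 m,
      (j : ℝ) * Real.log qR * ((piq F j : ℕ) : ℝ) / qR ^ j - Real.log qR
        = Real.log qR * (((j * piq F j : ℕ) : ℝ) / qR ^ j - 1) := by
    intro j _
    push_cast
    ring
  calc |(∑ j ∈ Finset.Icc 1 m,
          (j : ℝ) * Real.log qR * ((piq F j : ℕ) : ℝ) / qR ^ j) - (m : ℝ) * Real.log qR|
      = |∑ j ∈ Finset.Icc 1 m,
          Real.log qR * (((j * piq F j : ℕ) : ℝ) / qR ^ j - 1)| := by
        rw [hconst, ← Finset.sum_sub_distrib]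
        congr 1
        exact Finset.sum_congr rfl hrw
    _ ≤ ∑ j ∈ Finset.Icc 1 m,
          |Real.log qR * (((j * piq F j : ℕ) : ℝ) / qR ^ j - 1)| :=
        Finset.abs_sum_le_sum_abs _ _
    _ ≤ ∑ j ∈ Finset.Icc 1 m, Real.log qR * (2 * r ^ (j - 1)) := by
        apply Finset.sum_le_sum
        intro j hj
        rw [abs_mul, abs_of_nonneg hlog]
        exact mul_le_mul_of_nonneg_left (hterm j hj) hlog
    _ = Real.log qR * 2 * ∑ j ∈ Finset.Icc 1 m, r ^ (j - 1) := by
        rw [Finset.mul_sum]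
        apply Finset.sum_congr rfl
        intro j _
        ring
    _ ≤ Real.log qR * (2 * (1 - r)⁻¹) := by
        rw [mul_assoc]
        apply mul_le_mul_of_nonneg_left _ hlog
        exact mul_le_mul_of_nonneg_left hgeom (by norm_num)
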